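/- If p(t) = Σ a_i t^i and q(t) = Σ b_j t^j are univariate polynomials with nonnegative coefficients whose coefficient sequences are log-concave and have no internal zeros, then the coefficient sequence of the product p(t)q(t) is also log-concave with no internal zeros. -/

import Mathlib

/-- A sequence of reals is log-concave: `c_k · c_{k+2} ≤ c_{k+1}²` for all `k`. -/
def LogConcaveSeq (c : ℕ → ℝ) : Prop := ∀ k, c k * c (k + 2) ≤ c (k + 1) ^ 2

/-- A sequence has no internal zeros: its support is an interval. -/
def NoInternalZeros (c : ℕ → ℝ) : Prop :=
  ∀ i j k, i ≤ j → j ≤ k → c i ≠ 0 → c k ≠ 0 → c j ≠ 0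

noncomputable def zext (p : Polynomial ℝ) : ℤ → ℝ := fun i => if 0 ≤ i then p.coeff i.toNat else 0

lemma zext_nonneg (p : Polynomial ℝ) (hp0 : ∀ k, 0 ≤ p.coeff k) (i : ℤ) : 0 ≤ zext p i := by
  unfold zext; split
  · exact hp0 _
  · exact le_refl 0

lemma zext_lc (p : Polynomial ℝ) (hpl : LogConcaveSeq p.coeff)
    (k : ℤ) : zext p k * zext p (k + 2) ≤ zext p (k + 1) ^ 2 := by
  rcases lt_or_ge k 0 with hk | hk
  · rw [show zext p k = 0 from if_neg (not_le.2 hk), zero_mul]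
    exact sq_nonneg _
  · have h0 : zext p k = p.coeff k.toNat := if_pos hk
    have h1 : zext p (k + 1) = p.coeff (k.toNat + 1) := by
      rw [zext, if_pos (by omega)]; congr 1; omega
    have h2 : zext p (k + 2) = p.coeff (k.toNat + 2) := by
      rw [zext, if_pos (by omega)]; congr 1; omega
    rw [h0, h1, h2]; exact hpl k.toNat

lemma zext_niz (p : Polynomial ℝ) (hpz : NoInternalZeros p.coeff)
    (i j k : ℤ) (hij : i ≤ j) (hjk : j ≤ k) (hi : zext p i ≠ 0) (hk : zext p k ≠ 0) :
    zext p j ≠ 0 := by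
  have hi0 : 0 ≤ i := by by_contra h; exact hi (if_neg h)
  have hj0 : 0 ≤ j := le_trans hi0 hij
  have hk0 : 0 ≤ k := le_trans hj0 hjk
  rw [zext, if_pos hi0] at hi
  rw [zext, if_pos hk0] at hk
  rw [zext]; simp only [if_pos hj0]
  exact hpz i.toNat j.toNat k.toNat (by omega) (by omega) hi hk

lemma genLC (f : ℤ → ℝ) (h0 : ∀ i, 0 ≤ f i)
    (hlc : ∀ k : ℤ, f k * f (k + 2) ≤ f (k + 1) ^ 2)
    (hniz : ∀ i j k : ℤ, i ≤ j → j ≤ k → f i ≠ 0 → f k ≠ 0 → f j ≠ 0)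
    (v u : ℤ) (huv : v ≤ u) : f (v - 1) * f (u + 1) ≤ f v * f u := by
  rcases eq_or_ne (f (v - 1)) 0 with h | hv0
  · rw [h, zero_mul]; exact mul_nonneg (h0 _) (h0 _)
  rcases eq_or_ne (f (u + 1)) 0 with h | hu0
  · rw [h, mul_zero]; exact mul_nonneg (h0 _) (h0 _)
  have key : ∀ n : ℕ, ∀ w : ℤ, w = v + n → f (w + 1) ≠ 0 →
      f (v - 1) * f (w + 1) ≤ f v * f w := by
    intro n
    induction n with
    | zero =>
      intro w hw _
      have h := hlc (v - 1)
      rw [show v - 1 + 2 = v + 1 by ring, show v - 1 + 1 = v by ring] at h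
      subst hw
      simpa [sq] using h
    | succ n ih =>
      intro w hw hne
      have hw' : w = (v + n) + 1 := by push_cast [hw]; ring
      have h1 : f (v + n + 1) ≠ 0 :=
        hniz (v - 1) (v + n + 1) (w + 1) (by omega) (by omega) hv0 hne
      have h2 : f (v + n) ≠ 0 :=
        hniz (v - 1) (v + n) (w + 1) (by omega) (by omega) hv0 hne
      have p1 : 0 < f (v + n + 1) := (h0 _).lt_of_ne (Ne.symm h1)
      have ihh := ih (v + n) rfl h1
      have hl := hlc (v + n)
      rw [show v + n + 2 = w + 1 by omega] at hl
      rw [hw', show v + n + 1 + 1 = w + 1 by omega]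
      have step : f (v - 1) * f (w + 1) * f (v + n + 1) ≤
          f v * f (v + n + 1) * f (v + n + 1) := by
        nlinarith [mul_le_mul_of_nonneg_right ihh (h0 (w + 1)),
          mul_le_mul_of_nonneg_left hl (h0 v)]
      exact le_of_mul_le_mul_right step p1
  rcases eq_or_lt_of_le huv with rfl | hlt
  · have h := hlc (v - 1)
    rw [show v - 1 + 2 = v + 1 by ring, show v - 1 + 1 = v by ring] at h
    simpa [sq] using h
  · exact key (u - v).toNat u (by omega) hu0

lemma conv_eq (p q : Polynomial ℝ) (k : ℕ) (s : Finset ℤ) (hs : Finset.Icc (0 : ℤ) k ⊆ s) :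
    ∑ i ∈ s, zext p i * zext q (k - i) = (p * q).coeff k := by
  have h1 : ∑ i ∈ s, zext p i * zext q (k - i)
      = ∑ i ∈ Finset.Icc (0 : ℤ) k, zext p i * zext q (k - i) := by
    refine (Finset.sum_subset hs ?_).symm
    intro i _ hi
    simp only [Finset.mem_Icc, not_and, not_le] at hi
    rcases le_or_gt 0 i with h | h
    · have : (k : ℤ) - i < 0 := by have := hi h; omega
      rw [show zext q (k - i) = 0 from if_neg (by omega), mul_zero]
    · rw [show zext p i = 0 from if_neg (by omega), zero_mul]
  rw [h1, Polynomial.coeff_mul, Finset.Nat.sum_antidiagonal_eq_sum_range_succ_mk]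
  refine Finset.sum_nbij' (fun i => i.toNat) (fun n => (n : ℤ)) ?_ ?_ ?_ ?_ ?_
  · intro a ha; simp only [Finset.mem_Icc] at ha; simp only [Finset.mem_range]; omega
  · intro a ha; simp only [Finset.mem_range] at ha; simp only [Finset.mem_Icc]; omega
  · intro a ha; simp only [Finset.mem_Icc] at ha; show ((a.toNat : ℤ)) = a; omega
  · intro a ha; show ((a : ℤ)).toNat = a; omega
  · intro a ha
    simp only [Finset.mem_Icc] at ha
    rw [show zext p a = p.coeff a.toNat from if_pos ha.1,
        show zext q (k - a) = q.coeff (k - a.toNat) from ?_]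
    · rw [zext, if_pos (by omega)]; congr 1; omega

lemma sum_shift (g : ℤ → ℝ) (a b c : ℤ) :
    ∑ i ∈ Finset.Icc a b, g (i + c) = ∑ i ∈ Finset.Icc (a + c) (b + c), g i := by
  rw [← Finset.map_add_right_Icc, Finset.sum_map]
  rfl

section Main

variable (p q : Polynomial ℝ)

lemma main_lc (hp0 : ∀ k, 0 ≤ p.coeff k) (hq0 : ∀ k, 0 ≤ q.coeff k)
    (hpl : LogConcaveSeq p.coeff) (hql : LogConcaveSeq q.coeff)
    (hpz : NoInternalZeros p.coeff) (hqz : NoInternalZeros q.coeff) (k : ℕ) :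
    (p * q).coeff k * (p * q).coeff (k + 2) ≤ (p * q).coeff (k + 1) ^ 2 := by
  set A : ℤ → ℝ := zext p with hA
  set B : ℤ → ℝ := zext q with hB
  set K : ℤ := (k : ℤ) with hK
  set U : Finset ℤ := Finset.Icc (-2 : ℤ) (K + 3) with hU
  set V : Finset ℤ := Finset.Icc (-3 : ℤ) (K + 2) with hV
  -- the four one-dimensional sums
  have hP1 : ∑ i ∈ U, A i * B (K + 1 - i) = (p * q).coeff (k + 1) := by
    have := conv_eq p q (k + 1) U (by intro x hx; simp only [hU, Finset.mem_Icc] at *; omega)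
    rw [show (((k + 1 : ℕ)) : ℤ) = K + 1 by push_cast; ring] at this
    exact this
  have hQ1 : ∑ j ∈ V, A j * B (K + 1 - j) = (p * q).coeff (k + 1) := by
    have := conv_eq p q (k + 1) V (by intro x hx; simp only [hV, Finset.mem_Icc] at *; omega)
    rw [show (((k + 1 : ℕ)) : ℤ) = K + 1 by push_cast; ring] at this
    exact this
  have hP0 : ∑ i ∈ U, A (i - 1) * B (K + 1 - i) = (p * q).coeff k := by
    have e1 : ∀ i : ℤ, A (i - 1) * B (K + 1 - i)
        = (fun t => A t * B (K - t)) (i + (-1)) := by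
      intro i; simp only
      congr 2 <;> ring
    rw [Finset.sum_congr rfl (fun i _ => e1 i), hU, sum_shift (fun t => A t * B (K - t)) (-2) (K + 3) (-1)]
    rw [show (-2 : ℤ) + -1 = -3 by ring, show K + 3 + -1 = K + 2 by ring]
    exact conv_eq p q k _ (by intro x hx; simp only [Finset.mem_Icc] at *; omega)
  have hQ2 : ∑ j ∈ V, A (j + 1) * B (K + 1 - j) = (p * q).coeff (k + 2) := by
    have e1 : ∀ j : ℤ, A (j + 1) * B (K + 1 - j)
        = (fun t => A t * B (K + 2 - t)) (j + 1) := by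
      intro j; simp only
      congr 2 <;> ring
    rw [Finset.sum_congr rfl (fun j _ => e1 j), hV, sum_shift (fun t => A t * B (K + 2 - t)) (-3) (K + 2) 1]
    rw [show (-3 : ℤ) + 1 = -2 by ring]
    have := conv_eq p q (k + 2) (Finset.Icc (-2 : ℤ) (K + 2 + 1))
      (by intro x hx; simp only [Finset.mem_Icc] at *; omega)
    rw [show (((k + 2 : ℕ)) : ℤ) = K + 2 by push_cast; ring] at this
    exact this
  -- the double–sum expression for the discriminant
  set F : ℤ × ℤ → ℝ := fun x =>
    (A x.1 * A x.2 - A (x.1 - 1) * A (x.2 + 1)) * (B (K + 1 - x.1) * B (K + 1 - x.2)) with hF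
  have hD : (p * q).coeff (k + 1) ^ 2 - (p * q).coeff k * (p * q).coeff (k + 2)
      = ∑ x ∈ U ×ˢ V, F x := by
    rw [sq, ← hP0, ← hQ2]
    nth_rewrite 1 [← hP1]
    rw [← hQ1, Finset.sum_mul_sum, Finset.sum_mul_sum, Finset.sum_product]
    rw [← Finset.sum_sub_distrib]
    refine Finset.sum_congr rfl fun i _ => ?_
    rw [← Finset.sum_sub_distrib]
    refine Finset.sum_congr rfl fun j _ => ?_
    simp only [hF]; ring
  -- pointwise split of F according to the position of x.1 relative to x.2
  have hsplit : ∀ x : ℤ × ℤ, F x =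
      (if x.1 ≤ x.2 then F x else 0) + (if x.1 = x.2 + 1 then F x else 0) +
      (if x.2 + 2 ≤ x.1 then F x else 0) := by
    intro x
    by_cases h1 : x.1 ≤ x.2
    · rw [if_pos h1, if_neg (by omega), if_neg (by omega)]; ring
    · by_cases h2 : x.1 = x.2 + 1
      · rw [if_neg h1, if_pos h2, if_neg (by omega)]; ring
      · rw [if_neg h1, if_neg h2, if_pos (by omega)]; ring
  have hDsplit : ∑ x ∈ U ×ˢ V, F x =
      (∑ x ∈ (U ×ˢ V).filter (fun x => x.1 ≤ x.2), F x) +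
      (∑ x ∈ (U ×ˢ V).filter (fun x => x.1 = x.2 + 1), F x) +
      (∑ x ∈ (U ×ˢ V).filter (fun x => x.2 + 2 ≤ x.1), F x) := by
    rw [Finset.sum_filter, Finset.sum_filter, Finset.sum_filter,
      ← Finset.sum_add_distrib, ← Finset.sum_add_distrib]
    exact Finset.sum_congr rfl fun x _ => hsplit x
  -- the middle part vanishes
  have hmid : ∑ x ∈ (U ×ˢ V).filter (fun x => x.1 = x.2 + 1), F x = 0 := by
    refine Finset.sum_eq_zero fun x hx => ?_
    obtain ⟨a, b⟩ := x
    obtain ⟨-, h2⟩ := Finset.mem_filter.1 hx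
    have h2' : a = b + 1 := h2
    subst h2'
    simp only [hF]
    rw [show b + 1 - 1 = b by ring]
    ring
  -- the third part pairs off with the first
  have hpair : ∑ x ∈ (U ×ˢ V).filter (fun x => x.2 + 2 ≤ x.1), F x =
      ∑ x ∈ (U ×ˢ V).filter (fun x => x.1 ≤ x.2), F (x.2 + 1, x.1 - 1) := by
    refine Finset.sum_nbij' (fun x => (x.2 + 1, x.1 - 1)) (fun x => (x.2 + 1, x.1 - 1))
      ?_ ?_ ?_ ?_ ?_
    · intro a ha
      simp only [hU, hV, Finset.mem_filter, Finset.mem_product, Finset.mem_Icc] at *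
      omega
    · intro a ha
      simp only [hU, hV, Finset.mem_filter, Finset.mem_product, Finset.mem_Icc] at *
      omega
    · intro a _; show (a.1 - 1 + 1, a.2 + 1 - 1) = a; obtain ⟨a1, a2⟩ := a
      simp only [Prod.mk.injEq]; constructor <;> ring
    · intro a _; show (a.1 - 1 + 1, a.2 + 1 - 1) = a; obtain ⟨a1, a2⟩ := a
      simp only [Prod.mk.injEq]; constructor <;> ring
    · intro a _
      show F a = F ((a.2 + 1, a.1 - 1).2 + 1, (a.2 + 1, a.1 - 1).1 - 1)
      simp only
      rw [show a.1 - 1 + 1 = a.1 by ring, show a.2 + 1 - 1 = a.2 by ring]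
  -- each paired term is nonnegative
  have hterm : ∀ x ∈ (U ×ˢ V).filter (fun x : ℤ × ℤ => x.1 ≤ x.2),
      0 ≤ F x + F (x.2 + 1, x.1 - 1) := by
    intro x hx
    obtain ⟨-, hle0⟩ := Finset.mem_filter.1 hx
    obtain ⟨i, j⟩ := x
    have hle : i ≤ j := hle0
    have ha : 0 ≤ A i * A j - A (i - 1) * A (j + 1) := by
      have := genLC A (zext_nonneg p hp0) (zext_lc p hpl) (zext_niz p hpz) i j hle
      linarith
    have hb : 0 ≤ B (K + 1 - i) * B (K + 1 - j) - B (K - j) * B (K + 2 - i) := by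
      have := genLC B (zext_nonneg q hq0) (zext_lc q hql) (zext_niz q hqz)
        (K + 1 - j) (K + 1 - i) (by omega)
      rw [show K + 1 - j - 1 = K - j by ring, show K + 1 - i + 1 = K + 2 - i by ring] at this
      nlinarith [this]
    have heq : F (i, j) + F ((i, j).2 + 1, (i, j).1 - 1)
        = (A i * A j - A (i - 1) * A (j + 1)) *
          (B (K + 1 - i) * B (K + 1 - j) - B (K - j) * B (K + 2 - i)) := by
      simp only [hF]
      rw [show j + 1 - 1 = j by ring, show i - 1 + 1 = i by ring,
        show K + 1 - (j + 1) = K - j by ring, show K + 1 - (i - 1) = K + 2 - i by ring]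
      ring
    rw [heq]
    exact mul_nonneg ha hb
  have hsum : 0 ≤ ∑ x ∈ (U ×ˢ V).filter (fun x : ℤ × ℤ => x.1 ≤ x.2),
      (F x + F (x.2 + 1, x.1 - 1)) := Finset.sum_nonneg hterm
  rw [Finset.sum_add_distrib] at hsum
  linarith [hD, hDsplit, hmid, hpair, hsum]

end Main

lemma coeff_mul_term_le (p q : Polynomial ℝ) (hp0 : ∀ k, 0 ≤ p.coeff k)
    (hq0 : ∀ k, 0 ≤ q.coeff k) (u v j : ℕ) (huv : u + v = j) :
    p.coeff u * q.coeff v ≤ (p * q).coeff j := by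
  rw [Polynomial.coeff_mul]
  refine Finset.single_le_sum (f := fun x : ℕ × ℕ => p.coeff x.1 * q.coeff x.2)
    (fun x _ => mul_nonneg (hp0 _) (hq0 _)) (a := (u, v)) ?_
  exact Finset.HasAntidiagonal.mem_antidiagonal.2 huv

/-- The product of two polynomials with nonnegative, log-concave coefficient
sequences having no internal zeros again has a log-concave coefficient sequence
with no internal zeros. -/
theorem logConcave_noInternalZeros_mul (p q : Polynomial ℝ)
    (hp0 : ∀ k, 0 ≤ p.coeff k) (hq0 : ∀ k, 0 ≤ q.coeff k)
    (hpl : LogConcaveSeq p.coeff) (hql : LogConcaveSeq q.coeff)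
    (hpz : NoInternalZeros p.coeff) (hqz : NoInternalZeros q.coeff) :
    LogConcaveSeq (p * q).coeff ∧ NoInternalZeros (p * q).coeff := by
  constructor
  · exact fun k => main_lc p q hp0 hq0 hpl hql hpz hqz k
  · intro i j k hij hjk hi hk
    -- extract witnesses from the nonvanishing coefficients
    have hwit : ∀ m : ℕ, (p * q).coeff m ≠ 0 →
        ∃ x y : ℕ, x + y = m ∧ p.coeff x ≠ 0 ∧ q.coeff y ≠ 0 := by
      intro m hm
      rw [Polynomial.coeff_mul] at hm
      obtain ⟨x, hxmem, hx⟩ := Finset.exists_ne_zero_of_sum_ne_zero hm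
      exact ⟨x.1, x.2, Finset.HasAntidiagonal.mem_antidiagonal.1 hxmem,
        fun h => hx (by rw [h, zero_mul]), fun h => hx (by rw [h, mul_zero])⟩
    obtain ⟨x, y, hxy, hx, hy⟩ := hwit i hi
    obtain ⟨x', y', hxy', hx', hy'⟩ := hwit k hk
    have hpmin : p.coeff (min x x') ≠ 0 := by
      rcases le_total x x' with h | h
      · rw [min_eq_left h]; exact hx
      · rw [min_eq_right h]; exact hx'
    have hpmax : p.coeff (max x x') ≠ 0 := by
      rcases le_total x x' with h | h
      · rw [max_eq_right h]; exact hx'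
      · rw [max_eq_left h]; exact hx
    have hqmin : q.coeff (min y y') ≠ 0 := by
      rcases le_total y y' with h | h
      · rw [min_eq_left h]; exact hy
      · rw [min_eq_right h]; exact hy'
    have hqmax : q.coeff (max y y') ≠ 0 := by
      rcases le_total y y' with h | h
      · rw [max_eq_right h]; exact hy'
      · rw [max_eq_left h]; exact hy
    have hpall : ∀ t, min x x' ≤ t → t ≤ max x x' → p.coeff t ≠ 0 :=
      fun t h1 h2 => hpz _ t _ h1 h2 hpmin hpmax
    have hqall : ∀ t, min y y' ≤ t → t ≤ max y y' → q.coeff t ≠ 0 :=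
      fun t h1 h2 => hqz _ t _ h1 h2 hqmin hqmax
    have hb1 : min x x' ≤ x ∧ x ≤ max x x' := ⟨min_le_left _ _, le_max_left _ _⟩
    have hb2 : min x x' ≤ x' ∧ x' ≤ max x x' := ⟨min_le_right _ _, le_max_right _ _⟩
    have hb3 : min y y' ≤ y ∧ y ≤ max y y' := ⟨min_le_left _ _, le_max_left _ _⟩
    have hb4 : min y y' ≤ y' ∧ y' ≤ max y y' := ⟨min_le_right _ _, le_max_right _ _⟩
    -- find a decomposition j = u + v with both coefficients nonzero
    obtain ⟨u, v, huv, hu, hv⟩ :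
        ∃ u v : ℕ, u + v = j ∧ p.coeff u ≠ 0 ∧ q.coeff v ≠ 0 := by
      by_cases h : j - min y y' ≤ max x x'
      · refine ⟨j - min y y', min y y', by omega, ?_, hqmin⟩
        exact hpall _ (by omega) (by omega)
      · refine ⟨max x x', j - max x x', by omega, hpmax, ?_⟩
        exact hqall _ (by omega) (by omega)
    have hpos : 0 < p.coeff u * q.coeff v :=
      mul_pos ((hp0 u).lt_of_ne (Ne.symm hu)) ((hq0 v).lt_of_ne (Ne.symm hv))
    have := coeff_mul_term_le p q hp0 hq0 u v j huv
    exact ne_of_gt (lt_of_lt_of_le hpos this)
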